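/- Let q, λ ∈ ℂ with |q| < 1, λ ≠ 0, 1 + λ² ≠ 0, and suppose λ²q^k ≠ 1 and λ² ≠ q^k for all integers k ≥ 1. Set α = λ/(1+λ²) and λ̄ = 1/λ, and let P'_w, Q'_w be given by the recurrences with this α. Let w ≥ 0 be an integer, and set A'_w = λ̄^w ψ(λ,q²) ψ(λ̄,q^{w+2}) − λ^w ψ(λ̄,q²) ψ(λ,q^{w+2}) and D'_w = (1+λ²)[λ̄^w ψ(λ,q) ψ(λ̄,q^{w+2}) − λ^{w+2} ψ(λ̄,q) ψ(λ,q^{w+2})]. If Q'_w ≠ 0, D'_w ≠ 0 and D'_w ≠ λ²(1−q)A'_w, then P'_w/Q'_w = 1 / (1 − λ²(1−q)A'_w / D'_w). -/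

import Mathlib

/-!
STATEMENT 5 (Theorem 2, q-secant case): the convergents `P'_w / Q'_w` of the continued
fraction are given explicitly in terms of the basic hypergeometric series `ψ`.
-/

open Complex

/-- The `q`-Pochhammer symbol `(a;q)_k = ∏_{j=0}^{k-1} (1 - a q^j)`. -/
noncomputable def qPoch (a q : ℂ) (k : ℕ) : ℂ := ∏ j ∈ Finset.range k, (1 - a * q ^ j)

/-- `ψ(λ,x) = Σ_k (-λ²q;q²)_k x^k / ((q;q)_k (λ²q;q)_k) = ₂φ₁(iλ√q, -iλ√q; λ²q; q, x)`. -/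
noncomputable def psi (q lam x : ℂ) : ℂ :=
  ∑' k : ℕ, qPoch (-(lam ^ 2 * q)) (q ^ 2) k * x ^ k / (qPoch q q k * qPoch (lam ^ 2 * q) q k)

/-- `Pseq' α q (w+1) = P'_w`: `P'_{-1} = 0`, `P'_0 = 1`, and
`P'_w = P'_{w-1} - α²(1-q^w)² P'_{w-2}` for `w ≥ 1`. -/
noncomputable def Pseq' (α q : ℂ) : ℕ → ℂ
  | 0 => 0
  | 1 => 1
  | n + 2 => Pseq' α q (n + 1) - α ^ 2 * (1 - q ^ (n + 1)) ^ 2 * Pseq' α q n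

/-- `Qseq' α q (w+1) = Q'_w`: `Q'_{-1} = 1`, `Q'_0 = 1`, and
`Q'_w = Q'_{w-1} - α²(1-q^w)² Q'_{w-2}` for `w ≥ 1`. -/
noncomputable def Qseq' (α q : ℂ) : ℕ → ℂ
  | 0 => 1
  | 1 => 1
  | n + 2 => Qseq' α q (n + 1) - α ^ 2 * (1 - q ^ (n + 1)) ^ 2 * Qseq' α q n

/-! ### Auxiliary definitions -/

/-- Coefficients of the series `ψ`. -/
noncomputable def Cc (q lam : ℂ) (k : ℕ) : ℂ :=
  qPoch (-(lam ^ 2 * q)) (q ^ 2) k / (qPoch q q k * qPoch (lam ^ 2 * q) q k)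

lemma qPoch_zero (a q : ℂ) : qPoch a q 0 = 1 := by simp [qPoch]

lemma qPoch_succ (a q : ℂ) (k : ℕ) :
    qPoch a q (k + 1) = qPoch a q k * (1 - a * q ^ k) := Finset.prod_range_succ _ _

lemma psi_eq_tsum (q lam x : ℂ) : psi q lam x = ∑' k : ℕ, Cc q lam k * x ^ k := by
  unfold psi Cc
  exact tsum_congr fun k => by rw [mul_div_right_comm]

lemma one_sub_qpow_ne_zero {q : ℂ} (hq : ‖q‖ < 1) (k : ℕ) :
    (1 : ℂ) - q ^ (k + 1) ≠ 0 := by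
  intro h
  have h1 : q ^ (k + 1) = 1 := by linear_combination -h
  have h2 : ‖q‖ ^ (k + 1) < 1 := by
    have h0 : 0 ≤ ‖q‖ := norm_nonneg _
    calc ‖q‖ ^ (k + 1) ≤ ‖q‖ ^ 1 :=
          pow_le_pow_of_le_one h0 hq.le (by omega)
      _ < 1 := by simpa using hq
  rw [← norm_pow, h1] at h2
  simp at h2

lemma qPoch_q_ne_zero {q : ℂ} (hq : ‖q‖ < 1) (k : ℕ) : qPoch q q k ≠ 0 := by
  unfold qPoch
  rw [Finset.prod_ne_zero_iff]
  intro j _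
  have : q * q ^ j = q ^ (j + 1) := (pow_succ' q j).symm
  rw [this]
  exact one_sub_qpow_ne_zero hq j

lemma qPoch_lam_ne_zero {q lam : ℂ} (hden : ∀ k : ℕ, 1 ≤ k → lam ^ 2 * q ^ k ≠ 1) (k : ℕ) :
    qPoch (lam ^ 2 * q) q k ≠ 0 := by
  unfold qPoch
  rw [Finset.prod_ne_zero_iff]
  intro j _
  have h : lam ^ 2 * q * q ^ j = lam ^ 2 * q ^ (j + 1) := by ring
  rw [h]
  exact sub_ne_zero_of_ne fun hc => hden (j + 1) (by omega) hc.symm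

lemma Cc_mul {q lam : ℂ} (hq : ‖q‖ < 1)
    (hden : ∀ k : ℕ, 1 ≤ k → lam ^ 2 * q ^ k ≠ 1) (k : ℕ) :
    Cc q lam (k + 1) * ((1 - q ^ (k + 1)) * (1 - lam ^ 2 * q ^ (k + 1)))
      = Cc q lam k * (1 + lam ^ 2 * q ^ (2 * k + 1)) := by
  unfold Cc
  rw [qPoch_succ, qPoch_succ, qPoch_succ]
  have h1 := qPoch_q_ne_zero hq k
  have h2 := qPoch_lam_ne_zero hden k
  have h3 := one_sub_qpow_ne_zero hq k
  have h4 : (1 : ℂ) - lam ^ 2 * q ^ (k + 1) ≠ 0 :=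
    sub_ne_zero_of_ne fun hc => hden (k + 1) (by omega) hc.symm
  have e1 : (1 : ℂ) - q * q ^ k = 1 - q ^ (k + 1) := by ring
  have e2 : (1 : ℂ) - lam ^ 2 * q * q ^ k = 1 - lam ^ 2 * q ^ (k + 1) := by ring
  have e3 : (1 : ℂ) - -(lam ^ 2 * q) * (q ^ 2) ^ k = 1 + lam ^ 2 * q ^ (2 * k + 1) := by
    rw [← pow_mul]; ring
  rw [e1, e2, e3]
  field_simp

lemma summable_Cc {q lam : ℂ} (hq : ‖q‖ < 1)
    (hden : ∀ k : ℕ, 1 ≤ k → lam ^ 2 * q ^ k ≠ 1) (y : ℂ) (hy : ‖y‖ < 1) :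
    Summable (fun k : ℕ => Cc q lam k * y ^ k) := by
  set r : ℝ := (1 + ‖y‖) / 2 with hr
  have hr1 : r < 1 := by rw [hr]; linarith
  have hyr : ‖y‖ < r := by rw [hr]; linarith
  apply summable_of_ratio_norm_eventually_le hr1
  have htq : Filter.Tendsto (fun k : ℕ => q ^ k) Filter.atTop (nhds 0) :=
    tendsto_pow_atTop_nhds_zero_of_norm_lt_one (by simpa using hq)
  have htq1 : Filter.Tendsto (fun k : ℕ => q ^ (k + 1)) Filter.atTop (nhds 0) := by
    have h' := htq.mul_const q
    simp only [zero_mul] at h'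
    convert h' using 2 with k
    rw [pow_succ]
  have htq2 : Filter.Tendsto (fun k : ℕ => q ^ (2 * k + 1)) Filter.atTop (nhds 0) := by
    have h' := (htq.pow 2).mul_const q
    simp only [zero_mul, zero_pow, ne_eq, OfNat.ofNat_ne_zero, not_false_eq_true] at h'
    convert h' using 2 with k
    rw [pow_succ, ← pow_mul, mul_comm 2 k]
  have ht1 : Filter.Tendsto (fun k : ℕ => ‖y * (1 + lam ^ 2 * q ^ (2 * k + 1))‖)
      Filter.atTop (nhds (‖y‖)) := by
    have h' : Filter.Tendsto (fun k : ℕ => y * (1 + lam ^ 2 * q ^ (2 * k + 1)))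
        Filter.atTop (nhds (y * (1 + lam ^ 2 * 0))) :=
      Filter.Tendsto.const_mul _ (Filter.Tendsto.const_add _
        (Filter.Tendsto.const_mul _ htq2))
    have h'' := h'.norm
    simp only [mul_zero, add_zero, mul_one] at h''
    simpa using h''
  have ht2 : Filter.Tendsto
      (fun k : ℕ => r * ‖(1 - q ^ (k + 1)) * (1 - lam ^ 2 * q ^ (k + 1))‖)
      Filter.atTop (nhds r) := by
    have h' : Filter.Tendsto
        (fun k : ℕ => (1 - q ^ (k + 1)) * (1 - lam ^ 2 * q ^ (k + 1)))
        Filter.atTop (nhds ((1 - 0) * (1 - lam ^ 2 * 0))) :=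
      Filter.Tendsto.mul (Filter.Tendsto.const_sub _ htq1)
        (Filter.Tendsto.const_sub _ (Filter.Tendsto.const_mul _ htq1))
    have h'' := (h'.norm).const_mul r
    simp only [mul_zero, sub_zero, mul_one, norm_one] at h''
    simpa using h''
  have hev : ∀ᶠ k in Filter.atTop, ‖y * (1 + lam ^ 2 * q ^ (2 * k + 1))‖
      < r * ‖(1 - q ^ (k + 1)) * (1 - lam ^ 2 * q ^ (k + 1))‖ :=
    ht1.eventually_lt ht2 hyr
  filter_upwards [hev] with k hk2
  have h3 := one_sub_qpow_ne_zero hq k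
  have h4 : (1 : ℂ) - lam ^ 2 * q ^ (k + 1) ≠ 0 :=
    sub_ne_zero_of_ne fun hc => hden (k + 1) (by omega) hc.symm
  have hprodpos : 0 < ‖(1 - q ^ (k + 1)) * (1 - lam ^ 2 * q ^ (k + 1))‖ :=
    norm_pos_iff.mpr (mul_ne_zero h3 h4)
  rw [← mul_le_mul_iff_of_pos_right hprodpos]
  have heq : Cc q lam (k + 1) * y ^ (k + 1) * ((1 - q ^ (k + 1)) * (1 - lam ^ 2 * q ^ (k + 1)))
      = (Cc q lam k * y ^ k) * (y * (1 + lam ^ 2 * q ^ (2 * k + 1))) := by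
    linear_combination y ^ (k + 1) * Cc_mul hq hden k
  calc ‖Cc q lam (k + 1) * y ^ (k + 1)‖ * ‖(1 - q ^ (k + 1)) * (1 - lam ^ 2 * q ^ (k + 1))‖
      = ‖Cc q lam k * y ^ k‖ * ‖y * (1 + lam ^ 2 * q ^ (2 * k + 1))‖ := by
        rw [← norm_mul, ← norm_mul, heq]
    _ ≤ ‖Cc q lam k * y ^ k‖ * (r * ‖(1 - q ^ (k + 1)) * (1 - lam ^ 2 * q ^ (k + 1))‖) :=
        mul_le_mul_of_nonneg_left hk2.le (norm_nonneg _)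
    _ = r * ‖Cc q lam k * y ^ k‖ * ‖(1 - q ^ (k + 1)) * (1 - lam ^ 2 * q ^ (k + 1))‖ := by ring

lemma psi_funeq {q lam : ℂ} (hq : ‖q‖ < 1)
    (hden : ∀ k : ℕ, 1 ≤ k → lam ^ 2 * q ^ k ≠ 1) (x : ℂ) (hx : ‖x‖ < 1) :
    (1 - x) * psi q lam x
      = (1 + lam ^ 2) * psi q lam (q * x) - lam ^ 2 * (1 - q * x) * psi q lam (q ^ 2 * x) := by
  have h0q := norm_nonneg q
  have h0x := norm_nonneg x
  have hqx : ‖q * x‖ < 1 := by rw [norm_mul]; nlinarith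
  have hq2x : ‖q ^ 2 * x‖ < 1 := by rw [norm_mul, norm_pow]; nlinarith
  have S1 := summable_Cc hq hden x hx
  have S2 := summable_Cc hq hden (q * x) hqx
  have S3 := summable_Cc hq hden (q ^ 2 * x) hq2x
  set C := Cc q lam with hC
  set G : ℕ → ℂ := fun k =>
    C k * x ^ k - (1 + lam ^ 2) * (C k * (q * x) ^ k) + lam ^ 2 * (C k * (q ^ 2 * x) ^ k)
    with hG
  set H : ℕ → ℂ := fun k =>
    x * (C k * x ^ k) + (lam ^ 2 * (q * x)) * (C k * (q ^ 2 * x) ^ k) with hH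
  have SG : Summable G := (S1.sub (S2.mul_left _)).add (S3.mul_left _)
  have SH : Summable H := (S1.mul_left _).add (S3.mul_left _)
  have key : ∑' k : ℕ, ((1 - x) * (C k * x ^ k)
      - (1 + lam ^ 2) * (C k * (q * x) ^ k)
      + (lam ^ 2 * (1 - q * x)) * (C k * (q ^ 2 * x) ^ k)) = 0 := by
    have hTk : ∀ k : ℕ, (1 - x) * (C k * x ^ k)
        - (1 + lam ^ 2) * (C k * (q * x) ^ k)
        + (lam ^ 2 * (1 - q * x)) * (C k * (q ^ 2 * x) ^ k) = G k - H k := by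
      intro k
      simp only [hG, hH]
      ring
    rw [tsum_congr hTk, Summable.tsum_sub SG SH]
    have hstep : ∀ k : ℕ, G (k + 1) = H k := by
      intro k
      simp only [hG, hH, hC]
      linear_combination x ^ (k + 1) * Cc_mul hq hden k
    have hG0 : G 0 = 0 := by
      simp only [hG, pow_zero]
      ring
    rw [Summable.tsum_eq_zero_add SG, hG0, zero_add, tsum_congr hstep, sub_self]
  have expand : ∑' k : ℕ, ((1 - x) * (C k * x ^ k)
      - (1 + lam ^ 2) * (C k * (q * x) ^ k)
      + (lam ^ 2 * (1 - q * x)) * (C k * (q ^ 2 * x) ^ k))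
      = (1 - x) * psi q lam x - (1 + lam ^ 2) * psi q lam (q * x)
        + (lam ^ 2 * (1 - q * x)) * psi q lam (q ^ 2 * x) := by
    rw [Summable.tsum_add ((S1.mul_left _).sub (S2.mul_left _)) (S3.mul_left _),
      Summable.tsum_sub (S1.mul_left _) (S2.mul_left _), tsum_mul_left, tsum_mul_left, tsum_mul_left,
      psi_eq_tsum, psi_eq_tsum, psi_eq_tsum]
  rw [expand] at key
  linear_combination key

/-! ### The sequences -/

noncomputable def fseq (q lam mu : ℂ) (n : ℕ) : ℂ := lam * mu ^ n * psi q mu (q ^ (n + 1))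

noncomputable def gseq (q lam mu : ℂ) (n : ℕ) : ℂ := mu * lam ^ n * psi q lam (q ^ (n + 1))

noncomputable def Ae (q lam mu : ℂ) (n : ℕ) : ℂ :=
  psi q lam (q ^ 2) * fseq q lam mu n - psi q mu (q ^ 2) * gseq q lam mu n

noncomputable def De (q lam mu : ℂ) (n : ℕ) : ℂ :=
  (1 + lam ^ 2) * (psi q lam q * fseq q lam mu n - lam ^ 2 * psi q mu q * gseq q lam mu n)

noncomputable def kap (q al : ℂ) : ℕ → ℂ
  | 0 => 1 / (al * (1 - q))
  | n + 1 => kap q al n * (al * (1 - q ^ (n + 1)))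

lemma kap_ne_zero {q al : ℂ} (hq : ‖q‖ < 1) (hal : al ≠ 0) (n : ℕ) :
    kap q al n ≠ 0 := by
  induction n with
  | zero =>
    have h1 : (1 : ℂ) - q ≠ 0 := by simpa using one_sub_qpow_ne_zero hq 0
    simp only [kap]
    exact one_div_ne_zero (mul_ne_zero hal h1)
  | succ n ih =>
    exact mul_ne_zero ih (mul_ne_zero hal (one_sub_qpow_ne_zero hq n))

/-- Uniqueness of solutions of the P/Q recurrence. -/
lemma rec_unique {al q : ℂ} (X Y : ℕ → ℂ)
    (hX : ∀ n, X (n + 2) = X (n + 1) - al ^ 2 * (1 - q ^ (n + 1)) ^ 2 * X n)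
    (hY : ∀ n, Y (n + 2) = Y (n + 1) - al ^ 2 * (1 - q ^ (n + 1)) ^ 2 * Y n)
    (h0 : X 0 = Y 0) (h1 : X 1 = Y 1) : ∀ n, X n = Y n := by
  intro n
  induction n using Nat.strong_induction_on with
  | _ n ih =>
    match n with
    | 0 => exact h0
    | 1 => exact h1
    | n + 2 =>
      rw [hX n, hY n, ih (n + 1) (by omega), ih n (by omega)]

theorem convergents_qSecant (q lam : ℂ) (hq : ‖q‖ < 1) (hlam : lam ≠ 0)
    (hlam2 : 1 + lam ^ 2 ≠ 0)
    (hk : ∀ k : ℕ, 1 ≤ k → lam ^ 2 * q ^ k ≠ 1 ∧ lam ^ 2 ≠ q ^ k)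
    (w : ℕ) (A D : ℂ)
    (hA : A = (1 / lam) ^ w * psi q lam (q ^ 2) * psi q (1 / lam) (q ^ (w + 2))
        - lam ^ w * psi q (1 / lam) (q ^ 2) * psi q lam (q ^ (w + 2)))
    (hD : D = (1 + lam ^ 2) *
        ((1 / lam) ^ w * psi q lam q * psi q (1 / lam) (q ^ (w + 2))
          - lam ^ (w + 2) * psi q (1 / lam) q * psi q lam (q ^ (w + 2))))
    (hQ : Qseq' (lam / (1 + lam ^ 2)) q (w + 1) ≠ 0)
    (hD0 : D ≠ 0) (hDA : D ≠ lam ^ 2 * (1 - q) * A) :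
    Pseq' (lam / (1 + lam ^ 2)) q (w + 1) / Qseq' (lam / (1 + lam ^ 2)) q (w + 1)
      = 1 / (1 - lam ^ 2 * (1 - q) * A / D) := by
  obtain ⟨mu, hmudef⟩ : ∃ m : ℂ, m = 1 / lam := ⟨_, rfl⟩
  obtain ⟨al, haldef⟩ : ∃ a : ℂ, a = lam / (1 + lam ^ 2) := ⟨_, rfl⟩
  rw [← hmudef] at hA hD
  rw [← haldef] at hQ ⊢
  have hmu : lam * mu = 1 := by
    rw [hmudef]
    field_simp
  have hdenl : ∀ k : ℕ, 1 ≤ k → lam ^ 2 * q ^ k ≠ 1 := fun k hk' => (hk k hk').1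
  have hdenm : ∀ k : ℕ, 1 ≤ k → mu ^ 2 * q ^ k ≠ 1 := by
    intro k hk' h
    apply (hk k hk').2
    rw [hmudef] at h
    have hl2 : lam ^ 2 ≠ 0 := pow_ne_zero _ hlam
    field_simp at h
    exact h.symm
  have habspow : ∀ n : ℕ, ‖q ^ (n + 1)‖ < 1 := by
    intro n
    rw [norm_pow]
    calc ‖q‖ ^ (n + 1) ≤ ‖q‖ ^ 1 :=
          pow_le_pow_of_le_one (norm_nonneg _) hq.le (by omega)
      _ < 1 := by simpa using hq
  -- recurrences for fseq and gseq
  have hf : ∀ n : ℕ, (1 - q ^ (n + 2)) * fseq q lam mu (n + 2)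
      = (lam + mu) * fseq q lam mu (n + 1) - (1 - q ^ (n + 1)) * fseq q lam mu n := by
    intro n
    have h := psi_funeq hq hdenm (q ^ (n + 1)) (habspow n)
    have e1 : q * q ^ (n + 1) = q ^ (n + 2) := by ring
    have e2 : q ^ 2 * q ^ (n + 1) = q ^ (n + 3) := by ring
    rw [e1, e2] at h
    simp only [fseq]
    linear_combination (lam * mu ^ n) * h - (lam * mu ^ n * psi q mu (q ^ (n + 2))) * hmu
  have hg : ∀ n : ℕ, (1 - q ^ (n + 2)) * gseq q lam mu (n + 2)
      = (lam + mu) * gseq q lam mu (n + 1) - (1 - q ^ (n + 1)) * gseq q lam mu n := by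
    intro n
    have h := psi_funeq hq hdenl (q ^ (n + 1)) (habspow n)
    have e1 : q * q ^ (n + 1) = q ^ (n + 2) := by ring
    have e2 : q ^ 2 * q ^ (n + 1) = q ^ (n + 3) := by ring
    rw [e1, e2] at h
    simp only [gseq]
    linear_combination (mu * lam ^ n) * h - (mu * lam ^ n * psi q lam (q ^ (n + 2))) * hmu
  have hArec : ∀ n : ℕ, (1 - q ^ (n + 2)) * Ae q lam mu (n + 2)
      = (lam + mu) * Ae q lam mu (n + 1) - (1 - q ^ (n + 1)) * Ae q lam mu n := by
    intro n
    simp only [Ae]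
    linear_combination psi q lam (q ^ 2) * hf n - psi q mu (q ^ 2) * hg n
  have hDrec : ∀ n : ℕ, (1 - q ^ (n + 2)) * De q lam mu (n + 2)
      = (lam + mu) * De q lam mu (n + 1) - (1 - q ^ (n + 1)) * De q lam mu n := by
    intro n
    simp only [De]
    linear_combination ((1 + lam ^ 2) * psi q lam q) * hf n
      - ((1 + lam ^ 2) * lam ^ 2 * psi q mu q) * hg n
  -- basic facts
  have hal : al ≠ 0 := haldef ▸ div_ne_zero hlam hlam2
  have h1q : (1 : ℂ) - q ≠ 0 := by simpa using one_sub_qpow_ne_zero hq 0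
  have halmu : al * (lam + mu) = 1 := by
    rw [haldef, div_mul_eq_mul_div, div_eq_one_iff_eq hlam2]
    linear_combination hmu
  have hkap1 : kap q al 1 = 1 := by
    simp only [kap, zero_add, pow_one]
    exact one_div_mul_cancel (mul_ne_zero hal h1q)
  -- products satisfy the P/Q recurrence
  have hXrec : ∀ n : ℕ, De q lam mu (n + 2) * kap q al (n + 2)
      = De q lam mu (n + 1) * kap q al (n + 1)
        - al ^ 2 * (1 - q ^ (n + 1)) ^ 2 * (De q lam mu n * kap q al n) := by
    intro n
    simp only [kap]
    linear_combination (kap q al n * al ^ 2 * (1 - q ^ (n + 1))) * hDrec n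
      + (kap q al n * al * (1 - q ^ (n + 1)) * De q lam mu (n + 1)) * halmu
  have hYrec : ∀ n : ℕ, Ae q lam mu (n + 2) * kap q al (n + 2)
      = Ae q lam mu (n + 1) * kap q al (n + 1)
        - al ^ 2 * (1 - q ^ (n + 1)) ^ 2 * (Ae q lam mu n * kap q al n) := by
    intro n
    simp only [kap]
    linear_combination (kap q al n * al ^ 2 * (1 - q ^ (n + 1))) * hArec n
      + (kap q al n * al * (1 - q ^ (n + 1)) * Ae q lam mu (n + 1)) * halmu
  -- initial values
  have hDe0 : De q lam mu 0 = 0 := by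
    simp only [De, fseq, gseq, pow_zero, zero_add, pow_one]
    linear_combination (-(1 + lam ^ 2) * psi q lam q * psi q mu q * lam) * hmu
  have hAe1 : Ae q lam mu 1 = 0 := by
    simp only [Ae, fseq, gseq, pow_one, zero_add]
    rw [show (1:ℕ) + 1 = 2 from by norm_num]
    ring
  -- identification with P and Q
  have hXP : ∀ n : ℕ, De q lam mu n * kap q al n = De q lam mu 1 * Pseq' al q n := by
    apply rec_unique _ _ hXrec
    · intro n
      simp only [Pseq']
      ring
    · simp only [Pseq', mul_zero, hDe0, zero_mul]
    · rw [hkap1, mul_one]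
      simp only [Pseq', mul_one]
  have hYA : ∀ n : ℕ, Ae q lam mu n * kap q al n
      = (Ae q lam mu 0 * kap q al 0) * (Qseq' al q n - Pseq' al q n) := by
    apply rec_unique _ _ hYrec
    · intro n
      simp only [Pseq', Qseq']
      ring
    · simp only [Pseq', Qseq']
      ring
    · rw [hAe1, zero_mul]
      simp only [Pseq', Qseq']
      ring
  -- the key trivial identity
  have hkey : De q lam mu 1 = -(lam * (1 + lam ^ 2)) * Ae q lam mu 0 := by
    simp only [De, Ae, fseq, gseq, pow_one, pow_zero, zero_add]
    rw [show (1:ℕ) + 1 = 2 from by norm_num]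
    linear_combination (-(1 + lam ^ 2) * psi q mu q * psi q lam (q ^ 2) * lam ^ 2) * hmu
  have hkap0 : lam ^ 2 * (1 - q) * kap q al 0 = lam * (1 + lam ^ 2) := by
    simp only [kap, haldef]
    field_simp
  -- matching A, D with Ae, De
  have hpow1 : lam * mu ^ (w + 1) = mu ^ w := by
    calc lam * mu ^ (w + 1) = mu ^ w * (lam * mu) := by ring
      _ = mu ^ w := by rw [hmu, mul_one]
  have hpow2 : mu * lam ^ (w + 1) = lam ^ w := by
    calc mu * lam ^ (w + 1) = lam ^ w * (lam * mu) := by ring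
      _ = lam ^ w := by rw [hmu, mul_one]
  have hAe : A = Ae q lam mu (w + 1) := by
    rw [hA]
    simp only [Ae, fseq, gseq]
    rw [show w + 1 + 1 = w + 2 from rfl]
    linear_combination (psi q lam (q ^ 2) * psi q mu (q ^ (w + 2))) * hpow1.symm
      - (psi q mu (q ^ 2) * psi q lam (q ^ (w + 2))) * hpow2.symm
  have hDe : D = De q lam mu (w + 1) := by
    rw [hD]
    simp only [De, fseq, gseq]
    rw [show w + 1 + 1 = w + 2 from rfl]
    linear_combination ((1 + lam ^ 2) * psi q lam q * psi q mu (q ^ (w + 2))) * hpow1.symm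
      - ((1 + lam ^ 2) * lam ^ 2 * psi q mu q * psi q lam (q ^ (w + 2))) * hpow2.symm
  -- final algebra
  set P : ℂ := Pseq' al q (w + 1) with hPdef
  set Q : ℂ := Qseq' al q (w + 1) with hQdef
  have hDK : D * kap q al (w + 1) = De q lam mu 1 * P := by
    rw [hDe]
    exact hXP (w + 1)
  have hAK : lam ^ 2 * (1 - q) * A * kap q al (w + 1) = -(De q lam mu 1) * (Q - P) := by
    have h := hYA (w + 1)
    rw [← hAe] at h
    have hc0 : lam ^ 2 * (1 - q) * (Ae q lam mu 0 * kap q al 0) = -(De q lam mu 1) := by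
      linear_combination Ae q lam mu 0 * hkap0 + hkey
    linear_combination (lam ^ 2 * (1 - q)) * h + (Q - P) * hc0
  have hkapn : kap q al (w + 1) ≠ 0 := kap_ne_zero hq hal (w + 1)
  have hDe1 : De q lam mu 1 * P ≠ 0 := by
    rw [← hDK]
    exact mul_ne_zero hD0 hkapn
  have hsub : D - lam ^ 2 * (1 - q) * A ≠ 0 := sub_ne_zero_of_ne hDA
  have hcross : (D - lam ^ 2 * (1 - q) * A) * kap q al (w + 1) = De q lam mu 1 * Q := by
    linear_combination hDK - hAK
  have h1' : 1 - lam ^ 2 * (1 - q) * A / D = (D - lam ^ 2 * (1 - q) * A) / D := by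
    field_simp
  rw [h1', one_div_div, div_eq_div_iff hQ hsub]
  apply mul_right_cancel₀ hkapn
  linear_combination P * hcross - Q * hDK
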